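/- Fix a positive integer T and reals N > 0, γ₀ > 0, B > 0, and G_tot > 0. For G : Fin T → ℝ define f(G) = Σ_t G(t)/(G(t) + N) and F(G) = B·f(G)/(γ₀ + f(G)). Let D = { G : Fin T → ℝ | (∀ t, G(t) ≥ 0) ∧ Σ_t G(t) ≤ G_tot } and let G* be the constant allocation G*(t) = G_tot/T. Then G* ∈ D, F(G) ≤ F(G*) for all G ∈ D, and F(G) = F(G*) for G ∈ D implies G = G*. -/

import Mathlib

open scoped BigOperators

open Set Finset

lemma g_strictConcave {N : ℝ} (hN : 0 < N) :
    StrictConcaveOn ℝ (Ici (0:ℝ)) (fun x => x / (x + N)) := by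
  have key : StrictConcaveOn ℝ (Ioi (-N)) (fun x => x / (x + N)) := by
    have hd1 : ∀ x ∈ Ioi (-N), HasDerivAt (fun x : ℝ => x / (x + N)) (N / (x + N)^2) x := by
      intro x hx
      have hx' : x + N ≠ 0 := by simp only [Set.mem_Ioi] at hx; nlinarith
      have := (hasDerivAt_id x).div ((hasDerivAt_id x).add_const N) hx'
      refine this.congr_deriv ?_
      simp only [id]; field_simp; ring
    have hd2 : ∀ x ∈ Ioi (-N), HasDerivAt (fun x : ℝ => N / (x + N)^2) (-2 * N / (x + N)^3) x := by
      intro x hx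
      have hx' : x + N ≠ 0 := by simp only [Set.mem_Ioi] at hx; nlinarith
      have h2 : HasDerivAt (fun x : ℝ => (x + N)^2) (2 * (x + N)) x := by
        have := ((hasDerivAt_id x).add_const N).pow 2
        refine this.congr_deriv ?_; simp
      have := (hasDerivAt_const x N).div h2 (by positivity)
      refine this.congr_deriv ?_
      field_simp
      ring
    apply strictConcaveOn_of_deriv2_neg (convex_Ioi _)
    · apply ContinuousOn.div continuousOn_id (by fun_prop)
      intro x hx; simp only [Set.mem_Ioi] at hx; nlinarith
    · intro x hx
      rw [interior_Ioi] at hx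
      have hdg : deriv (fun x : ℝ => x / (x + N)) =ᶠ[nhds x] (fun x : ℝ => N / (x + N)^2) := by
        filter_upwards [Ioi_mem_nhds hx] with y hy
        exact (hd1 y hy).deriv
      have : deriv (deriv (fun x : ℝ => x / (x + N))) x = -2 * N / (x + N)^3 := by
        rw [Filter.EventuallyEq.deriv_eq hdg]
        exact (hd2 x hx).deriv
      simp only [Function.iterate_succ, Function.iterate_zero, Function.comp_apply, Function.id_def]
      rw [this]
      have h3 : (0:ℝ) < (x + N)^3 := by
        have hxN : 0 < x + N := by simp only [Set.mem_Ioi] at hx; linarith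
        positivity
      have h2 : -2 * N < 0 := by nlinarith
      exact div_neg_of_neg_of_pos h2 h3
  exact key.subset (fun x hx => lt_of_lt_of_le (by linarith : -N < 0) hx) (convex_Ici 0)

lemma g_strictMonoOn {N : ℝ} (hN : 0 < N) {a b : ℝ} (ha : 0 ≤ a) (hab : a < b) :
    a / (a + N) < b / (b + N) := by
  rw [div_lt_div_iff₀ (by linarith) (by linarith)]
  nlinarith

lemma F_strictMono {γ₀ B : ℝ} (hγ : 0 < γ₀) (hB : 0 < B) {a b : ℝ} (ha : 0 ≤ a) (hab : a < b) :
    B * a / (γ₀ + a) < B * b / (γ₀ + b) := by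
  rw [div_lt_div_iff₀ (by linarith) (by linarith)]
  nlinarith [mul_pos (mul_pos hB hγ) (sub_pos.mpr hab)]

/-- core of Theorem 3: the equal split is feasible, maximizes
the equilibrium revenue over the feasible set, and is the unique maximizer. -/
theorem equal_split_unique_optimum
    (T : ℕ) (hT : 0 < T)
    (N γ₀ B Gtot : ℝ) (hN : 0 < N) (hγ : 0 < γ₀) (hB : 0 < B) (hG : 0 < Gtot) :
    let f : (Fin T → ℝ) → ℝ := fun G => ∑ t, G t / (G t + N)
    let F : (Fin T → ℝ) → ℝ := fun G => B * f G / (γ₀ + f G)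
    let D : Set (Fin T → ℝ) := {G | (∀ t, 0 ≤ G t) ∧ (∑ t, G t) ≤ Gtot}
    let Gstar : Fin T → ℝ := fun _ => Gtot / T
    Gstar ∈ D ∧ (∀ G ∈ D, F G ≤ F Gstar) ∧ (∀ G ∈ D, F G = F Gstar → G = Gstar) := by
  intro f F D Gstar
  have hT' : (0:ℝ) < (T:ℝ) := by exact_mod_cast hT
  set g : ℝ → ℝ := fun x => x / (x + N) with hg
  -- weights
  set w : Fin T → ℝ := fun _ => (T:ℝ)⁻¹ with hw
  have hw0 : ∀ i ∈ (univ : Finset (Fin T)), 0 < w i := fun i _ => by positivity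
  have hw1 : ∑ i : Fin T, w i = 1 := by
    simp [hw, Finset.sum_const, mul_inv_cancel₀ hT'.ne']
  -- feasibility of Gstar
  have hsum_star : ∑ t : Fin T, Gstar t = Gtot := by
    simp [Gstar, Finset.sum_const, nsmul_eq_mul]
    field_simp
  have hstar_mem : Gstar ∈ D := by
    refine ⟨fun t => by positivity, by rw [hsum_star]⟩
  -- f Gstar = T * g (Gtot / T)
  have hfstar : f Gstar = (T:ℝ) * g (Gtot / T) := by
    simp [f, Gstar, g, Finset.sum_const, nsmul_eq_mul]
  -- nonnegativity of f on D
  have hf_nonneg : ∀ G ∈ D, 0 ≤ f G := by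
    intro G hGD
    apply Finset.sum_nonneg
    intro t _
    have := hGD.1 t
    positivity
  -- key: f G ≤ f Gstar with equality analysis
  have key : ∀ G ∈ D, f G ≤ (T:ℝ) * g ((∑ t, G t) / T) ∧ g ((∑ t, G t) / T) ≤ g (Gtot / T) := by
    intro G hGD
    have hs0 : 0 ≤ ∑ t, G t := Finset.sum_nonneg fun t _ => hGD.1 t
    constructor
    · have hmem : ∀ i ∈ (univ : Finset (Fin T)), G i ∈ Ici (0:ℝ) := fun i _ => hGD.1 i
      have := (g_strictConcave hN).concaveOn.le_map_sum (fun i _ => (hw0 i (mem_univ i)).le)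
        hw1 hmem
      have hsum : ∑ i : Fin T, w i • G i = (∑ t, G t) / T := by
        simp [hw, smul_eq_mul, ← Finset.mul_sum, div_eq_inv_mul]
      have hsum2 : ∑ i : Fin T, w i • g (G i) = (f G) / T := by
        simp [hw, smul_eq_mul, ← Finset.mul_sum, f, g, div_eq_inv_mul]
      rw [hsum, hsum2] at this
      calc f G = (T:ℝ) * (f G / T) := by field_simp
        _ ≤ (T:ℝ) * g ((∑ t, G t) / T) := by
            apply mul_le_mul_of_nonneg_left this hT'.le
    · rcases eq_or_lt_of_le hGD.2 with h | h
      · rw [h]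
      · exact (g_strictMonoOn hN (by positivity) (by gcongr)).le
  have hle : ∀ G ∈ D, f G ≤ f Gstar := by
    intro G hGD
    obtain ⟨h1, h2⟩ := key G hGD
    calc f G ≤ (T:ℝ) * g ((∑ t, G t) / T) := h1
      _ ≤ (T:ℝ) * g (Gtot / T) := by apply mul_le_mul_of_nonneg_left h2 hT'.le
      _ = f Gstar := hfstar.symm
  have hFle : ∀ G ∈ D, F G ≤ F Gstar := by
    intro G hGD
    rcases eq_or_lt_of_le (hle G hGD) with h | h
    · simp [F, h]
    · exact (F_strictMono hγ hB (hf_nonneg G hGD) h).le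
  refine ⟨hstar_mem, hFle, ?_⟩
  intro G hGD hFeq
  have hfeq : f G = f Gstar := by
    rcases eq_or_lt_of_le (hle G hGD) with h | h
    · exact h
    · exact absurd hFeq (ne_of_lt (F_strictMono hγ hB (hf_nonneg G hGD) h))
  obtain ⟨h1, h2⟩ := key G hGD
  set s := ∑ t, G t with hs
  have hs0 : 0 ≤ s := Finset.sum_nonneg fun t _ => hGD.1 t
  -- g (s/T) = g (Gtot/T)
  have hgeq : g (s / T) = g (Gtot / T) := by
    apply le_antisymm h2
    have : (T:ℝ) * g (Gtot / T) ≤ (T:ℝ) * g (s / T) := by rw [← hfstar, ← hfeq]; exact h1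
    exact le_of_mul_le_mul_left this hT'
  -- hence s = Gtot
  have hsG : s = Gtot := by
    rcases eq_or_lt_of_le hGD.2 with h | h
    · exact h
    · exact absurd hgeq (ne_of_lt (g_strictMonoOn hN (by positivity) (by gcongr)))
  -- equality in Jensen
  have hfG : f G = (T:ℝ) * g (s / T) := by
    rw [hfeq, hfstar, hgeq]
  have hsum : ∑ i : Fin T, w i • G i = s / T := by
    simp [hw, smul_eq_mul, ← Finset.mul_sum, div_eq_inv_mul, hs]
  have hsum2 : ∑ i : Fin T, w i • g (G i) = (f G) / T := by
    simp [hw, smul_eq_mul, ← Finset.mul_sum, f, g, div_eq_inv_mul]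
  have h_eq : g (∑ i : Fin T, w i • G i) ≤ ∑ i : Fin T, w i • g (G i) := by
    rw [hsum, hsum2, hfG]
    field_simp
    exact le_rfl
  have hconst := (g_strictConcave hN).eq_of_map_sum_eq hw0 hw1
    (fun i _ => hGD.1 i) h_eq
  -- conclude G = Gstar
  funext t
  have hsum_t : s = (T:ℝ) * G t := by
    rw [hs]
    rw [Finset.sum_congr rfl (fun i _ => hconst (Finset.mem_univ i) (Finset.mem_univ t))]
    simp [Finset.sum_const, nsmul_eq_mul]
  have : G t = Gtot / T := by
    rw [← hsG, hsum_t]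
    field_simp
  simpa [Gstar] using this
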